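/- Let d ≥ 2. Define u* ∈ [0,1]^d by u*_j = (d−1)/(d+1) for 1 ≤ j ≤ (d+1)/2, u*_j = d/(d+1) if j = d/2 + 1 and d is even, and u*_j = 1 otherwise. Then the function C* : [0,1]^d → ℝ defined by C*(u) = Σ_{j=0}^{d−1} min_{k=0}^{d−1} ( u_{((j+k) mod d)+1} − Σ_{i=1, i∉I(j,k)}^{d} (1 − u*_i) )^+, where I(j,k) = { ((j+l) mod d) + 1 : l = 0,1,…,k }, is a d-copula. -/

import Mathlib

/-- A `d`-copula: a function `C : [0,1]^d → ℝ` (defined on all of `(Fin d → ℝ)`,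
with the copula conditions imposed on `[0,1]^d`) that is grounded, has uniform
one-dimensional margins, and is `d`-increasing. -/
def IsCopula (d : ℕ) (C : (Fin d → ℝ) → ℝ) : Prop :=
  (∀ u : Fin d → ℝ, (∀ i, u i ∈ Set.Icc (0:ℝ) 1) → (∃ i, u i = 0) → C u = 0) ∧
  (∀ u : Fin d → ℝ, (∀ i, u i ∈ Set.Icc (0:ℝ) 1) →
    ∀ i : Fin d, (∀ j, j ≠ i → u j = 1) → C u = u i) ∧
  (∀ a b : Fin d → ℝ, (∀ i, a i ∈ Set.Icc (0:ℝ) 1) → (∀ i, b i ∈ Set.Icc (0:ℝ) 1) →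
    (∀ i, a i ≤ b i) →
    0 ≤ ∑ S : Finset (Fin d),
        (-1 : ℝ) ^ (d - S.card) * C (fun k => if k ∈ S then b k else a k))

/-- The extremal point `u*`: `u*_j = (d-1)/(d+1)` for `1 ≤ j ≤ (d+1)/2`,
`u*_j = d/(d+1)` if `j = d/2 + 1` and `d` is even, and `u*_j = 1` otherwise
(0-indexed here). -/
noncomputable def uStar (d : ℕ) : Fin d → ℝ := fun i =>
  if 2 * ((i : ℕ) + 1) ≤ d + 1 then ((d : ℝ) - 1) / ((d : ℝ) + 1)
  else if d % 2 = 0 ∧ (i : ℕ) = d / 2 then (d : ℝ) / ((d : ℝ) + 1)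
  else 1

/-- The index set `I(j,k) = {((j+l) mod d) + 1 : l = 0,…,k}` (0-indexed here). -/
def Iset (d : ℕ) (hd : 0 < d) (j k : ℕ) : Finset (Fin d) :=
  (Finset.range (k + 1)).image fun l => (⟨(j + l) % d, Nat.mod_lt _ hd⟩ : Fin d)

/-- The extremal function
`C*(u) = Σ_{j=0}^{d−1} min_{k=0}^{d−1} ( u_{((j+k) mod d)+1} − Σ_{i∉I(j,k)} (1 − u*_i) )^+`
(0-indexed here). -/
noncomputable def CStar (d : ℕ) (hd : 0 < d) (u : Fin d → ℝ) : ℝ :=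
  ∑ j ∈ Finset.range d,
    (Finset.Icc 0 (d - 1)).inf' (Finset.nonempty_Icc.mpr (Nat.zero_le _))
      fun k =>
        max (u ⟨(j + k) % d, Nat.mod_lt _ hd⟩ -
          ∑ i ∈ Finset.univ \ Iset d hd j k, (1 - uStar d i)) 0

/-! ### Helper lemmas -/

lemma step_id (N X Y B : ℝ) (h : Y ≤ X) :
    max (min N X - B) 0 - max (min N Y - B) 0 = max (min N X - max Y B) 0 := by
  simp only [min_def, max_def]; split_ifs <;> linarith

lemma keyG {ι : Type*} [DecidableEq ι] (s : Finset ι) (hs : s.Nonempty)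
    (X Y : ι → ℝ) :
    (∀ k ∈ s, Y k ≤ X k) → ∀ c : ℝ,
    ∑ T ∈ s.powerset, (-1:ℝ)^(s.card - T.card) *
      min c (s.inf' hs fun k => if k ∈ T then X k else Y k)
      = max (min c (s.inf' hs X) - s.sup' hs Y) 0 := by
  induction hs using Finset.Nonempty.cons_induction with
  | singleton a =>
    intro hXY c
    have e : ({a} : Finset ι).powerset = {∅, {a}} := by
      ext T
      simp [Finset.mem_powerset, Finset.subset_singleton_iff]
    have hne : (∅ : Finset ι) ∉ ({{a}} : Finset (Finset ι)) := by
      simp only [Finset.mem_singleton]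
      exact (Finset.singleton_ne_empty a).symm
    rw [e, Finset.sum_insert hne, Finset.sum_singleton]
    simp only [Finset.card_singleton, Finset.card_empty, Finset.inf'_singleton,
      Finset.sup'_singleton, Finset.notMem_empty, if_false, Finset.mem_singleton, if_true,
      pow_one, pow_zero]
    have := hXY a (by simp)
    norm_num
    simp only [min_def, max_def]; split_ifs <;> linarith
  | cons a s ha hs ih =>
    intro hXY c
    have hYX : ∀ k ∈ s, Y k ≤ X k := fun k hk => hXY k (Finset.mem_cons_of_mem hk)
    have hYXa : Y a ≤ X a := hXY a (Finset.mem_cons_self a s)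
    simp only [Finset.cons_eq_insert]
    rw [Finset.sum_powerset_insert ha]
    have key : ∀ T ∈ s.powerset,
        (-1:ℝ)^((insert a s).card - T.card) *
          min c ((insert a s).inf' (Finset.insert_nonempty a s) fun k => if k ∈ T then X k else Y k)
        + (-1:ℝ)^((insert a s).card - (insert a T).card) *
          min c ((insert a s).inf' (Finset.insert_nonempty a s) fun k => if k ∈ insert a T then X k else Y k)
        = (-1:ℝ)^(s.card - T.card) *
            (min (min c (X a)) (s.inf' hs fun k => if k ∈ T then X k else Y k))
        - (-1:ℝ)^(s.card - T.card) *
            (min (min c (Y a)) (s.inf' hs fun k => if k ∈ T then X k else Y k)) := by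
      intro T hT
      have hT' := Finset.mem_powerset.mp hT
      have h1 : a ∉ T := fun h => ha (hT' h)
      have h2 : T.card ≤ s.card := Finset.card_le_card hT'
      have e1 : (insert a s).card - (insert a T).card = s.card - T.card := by
        rw [Finset.card_insert_of_notMem ha, Finset.card_insert_of_notMem h1]; omega
      have e2 : (insert a s).card - T.card = (s.card - T.card) + 1 := by
        rw [Finset.card_insert_of_notMem ha]; omega
      have g0 : ∀ (T' : Finset ι), ((insert a s).inf' (Finset.insert_nonempty a s)
          fun k => if k ∈ T' then X k else Y k)
          = min (if a ∈ T' then X a else Y a) (s.inf' hs fun k => if k ∈ T' then X k else Y k) := by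
        intro T'
        rw [Finset.inf'_insert]
      rw [e1, e2, g0, g0]
      have g1 : (s.inf' hs fun k => if k ∈ insert a T then X k else Y k)
          = s.inf' hs fun k => if k ∈ T then X k else Y k := by
        apply Finset.inf'_congr _ rfl
        intro k hk
        have : k ≠ a := fun h => ha (h ▸ hk)
        simp [Finset.mem_insert, this]
      rw [g1]
      simp only [h1, if_false, Finset.mem_insert_self, if_true, pow_succ]
      rw [show min c (min (X a) (s.inf' hs fun k => if k ∈ T then X k else Y k))
            = min (min c (X a)) (s.inf' hs fun k => if k ∈ T then X k else Y k) by
          rw [min_assoc],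
        show min c (min (Y a) (s.inf' hs fun k => if k ∈ T then X k else Y k))
            = min (min c (Y a)) (s.inf' hs fun k => if k ∈ T then X k else Y k) by
          rw [min_assoc]]
      ring
    rw [← Finset.sum_add_distrib, Finset.sum_congr rfl key, Finset.sum_sub_distrib,
      ih hYX (min c (X a)), ih hYX (min c (Y a)), Finset.inf'_insert, Finset.sup'_insert]
    have := step_id (min c (s.inf' hs X)) (X a) (Y a) (s.sup' hs Y) hYXa
    rw [show min (min c (s.inf' hs X)) (X a) = min (min c (X a)) (s.inf' hs X) by
        rw [min_assoc, min_comm (s.inf' hs X), ← min_assoc],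
      show min (min c (s.inf' hs X)) (Y a) = min (min c (Y a)) (s.inf' hs X) by
        rw [min_assoc, min_comm (s.inf' hs X), ← min_assoc]] at this
    rw [this]
    congr 1
    rw [← min_assoc]

lemma key_nonneg {ι : Type*} [DecidableEq ι] (s : Finset ι) (hs : s.Nonempty)
    (X Y : ι → ℝ) (hXY : ∀ k ∈ s, Y k ≤ X k) :
    0 ≤ ∑ T ∈ s.powerset, (-1:ℝ)^(s.card - T.card) *
      (s.inf' hs fun k => if k ∈ T then X k else Y k) := by
  obtain ⟨k₀, hk₀⟩ := hs
  have hc : ∀ T : Finset ι,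
      min (X k₀) (s.inf' ⟨k₀, hk₀⟩ fun k => if k ∈ T then X k else Y k)
      = s.inf' ⟨k₀, hk₀⟩ fun k => if k ∈ T then X k else Y k := by
    intro T
    apply min_eq_right
    refine le_trans (Finset.inf'_le _ hk₀) ?_
    split_ifs with h
    · exact le_refl _
    · exact hXY k₀ hk₀
  calc (0:ℝ) ≤ max (min (X k₀) (s.inf' ⟨k₀, hk₀⟩ X) - s.sup' ⟨k₀, hk₀⟩ Y) 0 := le_max_right _ _
    _ = ∑ T ∈ s.powerset, (-1:ℝ)^(s.card - T.card) *
        min (X k₀) (s.inf' ⟨k₀, hk₀⟩ fun k => if k ∈ T then X k else Y k) :=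
      (keyG s ⟨k₀, hk₀⟩ X Y hXY (X k₀)).symm
    _ = _ := Finset.sum_congr rfl (fun T _ => by rw [hc])

lemma mod_helper1 (d i j : ℕ) (h : i < d) (h2 : j < d) : (j + (i + d - j) % d) % d = i := by
  rw [Nat.add_mod_mod, show j + (i + d - j) = i + d by omega, Nat.add_mod_right,
    Nat.mod_eq_of_lt h]

lemma mod_helper2 (d : ℕ) (hd : 0 < d) {j k k' : ℕ} (hk : k < d) (hk' : k' < d)
    (h : (j + k) % d = (j + k') % d) : k = k' := by
  have h1 : (j + k) % d = (j % d + k % d) % d := Nat.add_mod _ _ _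
  have h2 : (j + k') % d = (j % d + k' % d) % d := Nat.add_mod _ _ _
  rw [Nat.mod_eq_of_lt hk] at h1
  rw [Nat.mod_eq_of_lt hk'] at h2
  have hj := Nat.mod_lt j hd
  have e1 := Nat.div_add_mod (j % d + k) d
  have e2 := Nat.div_add_mod (j % d + k') d
  set q1 := (j % d + k) / d
  set q2 := (j % d + k') / d
  have hq1 : q1 ≤ 1 := Nat.lt_succ_iff.mp ((Nat.div_lt_iff_lt_mul hd).mpr (by omega))
  have hq2 : q2 ≤ 1 := Nat.lt_succ_iff.mp ((Nat.div_lt_iff_lt_mul hd).mpr (by omega))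
  interval_cases q1 <;> interval_cases q2 <;> omega

lemma mod_helper3 (d i r : ℕ) (hi : i < d) (hr : r < d) :
    (i + d - (i + d - r) % d) % d = r := by
  have hd : 0 < d := by omega
  have e1 := Nat.div_add_mod (i + d - r) d
  set q := (i + d - r) / d with hq
  set m := (i + d - r) % d with hm
  have hmlt : m < d := Nat.mod_lt _ hd
  have e2 : i + d - m = r + q * d := by
    have e3 : d * q = q * d := Nat.mul_comm _ _
    omega
  rw [e2, Nat.add_mul_mod_self_right, Nat.mod_eq_of_lt hr]

lemma uStar_le_one {d : ℕ} (hd : 1 ≤ d) (i : Fin d) : uStar d i ≤ 1 := by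
  have h0 : (1:ℝ) ≤ (d:ℝ) := by exact_mod_cast hd
  unfold uStar
  split_ifs
  · rw [div_le_one (by linarith)]; linarith
  · rw [div_le_one (by linarith)]; linarith
  · exact le_refl 1

lemma uStar_sum {d : ℕ} (hd : 1 ≤ d) : ∑ l : Fin d, (1 - uStar d l) = 1 := by
  have h0 : (0:ℝ) < (d:ℝ) + 1 := by positivity
  have hcast : ∀ l : Fin d, 1 - uStar d l =
      (fun n : ℕ => if 2 * (n + 1) ≤ d + 1 then 2/((d:ℝ)+1)
        else if d % 2 = 0 ∧ n = d / 2 then 1/((d:ℝ)+1) else 0) l.val := by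
    intro l
    simp only [uStar]
    split_ifs with h1 h2
    · field_simp; ring
    · field_simp; ring
    · ring
  rw [Finset.sum_congr rfl (fun l _ => hcast l)]
  rw [Fin.sum_univ_eq_sum_range (fun n : ℕ => if 2 * (n + 1) ≤ d + 1 then 2/((d:ℝ)+1)
      else if d % 2 = 0 ∧ n = d / 2 then 1/((d:ℝ)+1) else 0) d]
  rw [← Finset.sum_filter_add_sum_filter_not (Finset.range d) (fun n => 2 * (n + 1) ≤ d + 1)]
  have hfil : (Finset.range d).filter (fun n => 2 * (n + 1) ≤ d + 1) = Finset.range ((d+1)/2) := by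
    ext n; simp only [Finset.mem_filter, Finset.mem_range]; omega
  have hsum1 : ∑ n ∈ (Finset.range d).filter (fun n => 2 * (n + 1) ≤ d + 1),
      (if 2 * (n + 1) ≤ d + 1 then 2/((d:ℝ)+1)
        else if d % 2 = 0 ∧ n = d / 2 then 1/((d:ℝ)+1) else 0)
      = ((d+1)/2 : ℕ) * (2/((d:ℝ)+1)) := by
    rw [Finset.sum_congr hfil (fun n hn => by
      rw [if_pos]; simp only [Finset.mem_range] at hn; omega)]
    rw [Finset.sum_const, nsmul_eq_mul, Finset.card_range]
  rw [hsum1]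
  rcases Nat.even_or_odd d with he | ho
  · obtain ⟨m, hm⟩ := he
    have hm' : d = 2 * m := by omega
    have hmem : d / 2 ∈ (Finset.range d).filter (fun n => ¬(2 * (n + 1) ≤ d + 1)) := by
      simp only [Finset.mem_filter, Finset.mem_range]; omega
    rw [Finset.sum_eq_single_of_mem (d/2) hmem (fun b hb hne => by
      simp only [Finset.mem_filter, Finset.mem_range] at hb
      rw [if_neg (by omega), if_neg (by tauto)])]
    rw [if_neg (by omega), if_pos ⟨by omega, rfl⟩]
    have h2 : ((d+1)/2 : ℕ) = m := by omega
    rw [h2, hm']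
    have hm0 : 2*(m:ℝ)+1 ≠ 0 := by positivity
    push_cast
    field_simp
  · obtain ⟨m, hm⟩ := ho
    rw [Finset.sum_eq_zero (fun n hn => by
      simp only [Finset.mem_filter, Finset.mem_range] at hn
      rw [if_neg (by omega), if_neg (by omega)])]
    have h2 : ((d+1)/2 : ℕ) = m+1 := by omega
    rw [h2, hm]
    have hm0 : (m:ℝ)+1 ≠ 0 := by positivity
    push_cast
    field_simp
    ring

lemma telescope (g : ℕ → ℝ) (hg : ∀ r, 0 ≤ g r) (B : ℝ) (n : ℕ) :
    ∑ r ∈ Finset.range n, min (g r) (max ((∑ s ∈ Finset.range (r+1), g s) - B) 0)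
      = max ((∑ s ∈ Finset.range n, g s) - B) 0 - max (-B) 0 := by
  induction n with
  | zero => simp
  | succ n ih =>
    rw [Finset.sum_range_succ, ih, Finset.sum_range_succ g]
    have h := hg n
    set P := ∑ s ∈ Finset.range n, g s
    have : min (g n) (max (P + g n - B) 0) = max (P + g n - B) 0 - max (P - B) 0 := by
      simp only [min_def, max_def]; split_ifs <;> linarith
    rw [this]
    ring

lemma sum_compl_Iset {d : ℕ} (hd : 0 < d) (hd1 : 1 ≤ d) (j k : ℕ) :
    ∑ x ∈ Finset.univ \ Iset d hd j k, (1 - uStar d x)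
      = 1 - ∑ l ∈ Iset d hd j k, (1 - uStar d l) := by
  have h := Finset.sum_sdiff (f := fun l => 1 - uStar d l) (Finset.subset_univ (Iset d hd j k))
  rw [uStar_sum hd1] at h
  linarith

lemma CStar_grounded (d : ℕ) (hd2 : 2 ≤ d) (hd : 0 < d) (u : Fin d → ℝ)
    (hu : ∀ i, u i ∈ Set.Icc (0:ℝ) 1) (i₀ : Fin d) (h0 : u i₀ = 0) :
    CStar d hd u = 0 := by
  unfold CStar
  apply Finset.sum_eq_zero
  intro j hj
  rw [Finset.mem_range] at hj
  set kst := (i₀.val + d - j) % d with hkst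
  have hkstlt : kst < d := Nat.mod_lt _ hd
  have hmem : kst ∈ Finset.Icc 0 (d-1) := by
    rw [Finset.mem_Icc]; omega
  have hfin : (⟨(j + kst) % d, Nat.mod_lt _ hd⟩ : Fin d) = i₀ := by
    apply Fin.ext
    exact mod_helper1 d i₀.val j i₀.isLt hj
  have hterm : max (u ⟨(j + kst) % d, Nat.mod_lt _ hd⟩ -
      ∑ x ∈ Finset.univ \ Iset d hd j kst, (1 - uStar d x)) 0 = 0 := by
    rw [hfin, h0]
    have hS : 0 ≤ ∑ x ∈ Finset.univ \ Iset d hd j kst, (1 - uStar d x) :=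
      Finset.sum_nonneg (fun x _ => by linarith [uStar_le_one (by omega : 1 ≤ d) x])
    apply max_eq_right
    linarith
  apply le_antisymm
  · exact le_trans (Finset.inf'_le _ hmem) (le_of_eq hterm)
  · apply Finset.le_inf'
    intro k _
    exact le_max_right _ _

lemma CStar_increasing (d : ℕ) (hd2 : 2 ≤ d) (hd : 0 < d) (a b : Fin d → ℝ)
    (hab : ∀ i, a i ≤ b i) :
    0 ≤ ∑ S : Finset (Fin d),
        (-1 : ℝ) ^ (d - S.card) * CStar d hd (fun k => if k ∈ S then b k else a k) := by
  unfold CStar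
  simp_rw [Finset.mul_sum]
  rw [Finset.sum_comm]
  apply Finset.sum_nonneg
  intro j hj
  rw [Finset.mem_range] at hj
  -- the cyclic shift as an equivalence
  have hinj : Function.Injective (fun k : Fin d => (⟨(j + k.val) % d, Nat.mod_lt _ hd⟩ : Fin d)) := by
    intro k k' h
    have h' : (j + k.val) % d = (j + k'.val) % d := congrArg Fin.val h
    exact Fin.ext (mod_helper2 d hd k.isLt k'.isLt h')
  set σ : Fin d ≃ Fin d := Equiv.ofBijective _ (Finite.injective_iff_bijective.mp hinj) with hσ
  have hσval : ∀ k : Fin d, σ k = (⟨(j + k.val) % d, Nat.mod_lt _ hd⟩ : Fin d) := fun k => rfl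
  -- rewrite inf' over Icc as inf' over univ
  have hIcc : Finset.Icc 0 (d-1) = Finset.image Fin.val (Finset.univ : Finset (Fin d)) := by
    ext n
    simp only [Finset.mem_Icc, Finset.mem_image, Finset.mem_univ, true_and]
    constructor
    · intro h; exact ⟨⟨n, by omega⟩, rfl⟩
    · rintro ⟨k, rfl⟩; exact ⟨Nat.zero_le _, by omega⟩
  set X : Fin d → ℝ := fun k => max (b (σ k) -
      ∑ x ∈ Finset.univ \ Iset d hd j k.val, (1 - uStar d x)) 0 with hX
  set Y : Fin d → ℝ := fun k => max (a (σ k) -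
      ∑ x ∈ Finset.univ \ Iset d hd j k.val, (1 - uStar d x)) 0 with hY
  have hXY : ∀ k, Y k ≤ X k := by
    intro k
    apply max_le_max _ (le_refl 0)
    have := hab (σ k)
    linarith
  have huniv : (Finset.univ : Finset (Fin d)).Nonempty := ⟨⟨0, by omega⟩, Finset.mem_univ _⟩
  have hinf : ∀ v : Fin d → ℝ,
      ((Finset.Icc 0 (d-1)).inf' (Finset.nonempty_Icc.mpr (Nat.zero_le _))
        fun k => max (v ⟨(j + k) % d, Nat.mod_lt _ hd⟩ -
          ∑ x ∈ Finset.univ \ Iset d hd j k, (1 - uStar d x)) 0)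
      = Finset.univ.inf' huniv
          (fun k : Fin d => max (v (σ k) -
            ∑ x ∈ Finset.univ \ Iset d hd j k.val, (1 - uStar d x)) 0) := by
    intro v
    rw [Finset.inf'_congr (Finset.nonempty_Icc.mpr (Nat.zero_le _)) hIcc (fun x _ => rfl)]
    rw [Finset.inf'_image]
    rfl
  have hterm : ∀ S : Finset (Fin d),
      ((Finset.Icc 0 (d-1)).inf' (Finset.nonempty_Icc.mpr (Nat.zero_le _))
        fun k => max ((if (⟨(j + k) % d, Nat.mod_lt _ hd⟩ : Fin d) ∈ S
            then b ⟨(j + k) % d, Nat.mod_lt _ hd⟩ else a ⟨(j + k) % d, Nat.mod_lt _ hd⟩) -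
          ∑ x ∈ Finset.univ \ Iset d hd j k, (1 - uStar d x)) 0)
      = Finset.univ.inf' huniv (fun k : Fin d => if σ k ∈ S then X k else Y k) := by
    intro S
    rw [hinf (fun i => if i ∈ S then b i else a i)]
    apply Finset.inf'_congr _ rfl
    intro k _
    split_ifs with h
    · rfl
    · rfl
  -- now the sum over S
  have := key_nonneg (Finset.univ : Finset (Fin d)) huniv X Y (fun k _ => hXY k)
  rw [Finset.powerset_univ] at this
  simp only [Finset.card_univ, Fintype.card_fin] at this
  rw [show ∑ S : Finset (Fin d), (-1:ℝ)^(d - S.card) *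
      ((Finset.Icc 0 (d-1)).inf' (Finset.nonempty_Icc.mpr (Nat.zero_le _))
        fun k => max ((fun i => if i ∈ S then b i else a i) ⟨(j + k) % d, Nat.mod_lt _ hd⟩ -
          ∑ x ∈ Finset.univ \ Iset d hd j k, (1 - uStar d x)) 0)
      = ∑ T : Finset (Fin d), (-1:ℝ)^(d - T.card) *
          (Finset.univ.inf' huniv (fun k : Fin d => if k ∈ T then X k else Y k)) from ?_]
  · exact this
  · -- reindex by the equivalence on finsets
    rw [← Equiv.sum_comp (Equiv.finsetCongr σ)
      (fun S => (-1:ℝ)^(d - S.card) *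
        ((Finset.Icc 0 (d-1)).inf' (Finset.nonempty_Icc.mpr (Nat.zero_le _))
          fun k => max ((fun i => if i ∈ S then b i else a i) ⟨(j + k) % d, Nat.mod_lt _ hd⟩ -
            ∑ x ∈ Finset.univ \ Iset d hd j k, (1 - uStar d x)) 0))]
    apply Finset.sum_congr rfl
    intro T _
    have hcard : (Equiv.finsetCongr σ T).card = T.card := Finset.card_map _
    rw [hcard, hterm (Equiv.finsetCongr σ T)]
    congr 1
    apply Finset.inf'_congr _ rfl
    intro k _
    have hmem : σ k ∈ Equiv.finsetCongr σ T ↔ k ∈ T := by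
      simp [Equiv.finsetCongr_apply, Finset.mem_map']
    by_cases h : k ∈ T
    · rw [if_pos (hmem.mpr h), if_pos h]
    · rw [if_neg (fun hc => h (hmem.mp hc)), if_neg h]

lemma CStar_margin (d : ℕ) (hd2 : 2 ≤ d) (hd : 0 < d) (u : Fin d → ℝ)
    (hu : ∀ i, u i ∈ Set.Icc (0:ℝ) 1) (i : Fin d) (hmar : ∀ j, j ≠ i → u j = 1) :
    CStar d hd u = u i := by
  obtain ⟨hu0, hu1⟩ := hu i
  set v : ℕ → ℝ := fun n => 1 - uStar d ⟨n % d, Nat.mod_lt _ hd⟩ with hv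
  have hv0 : ∀ n, 0 ≤ v n := fun n => by
    have := uStar_le_one (by omega : 1 ≤ d) ⟨n % d, Nat.mod_lt _ hd⟩
    simp only [hv]; linarith
  set W : ℕ → ℕ → ℝ := fun j k => ∑ l ∈ Finset.range (k+1), v (j + l) with hW
  have hW0 : ∀ j k, 0 ≤ W j k := fun j k => Finset.sum_nonneg (fun l _ => hv0 _)
  have hWmono : ∀ j k k', k ≤ k' → W j k ≤ W j k' := by
    intro j k k' h
    apply Finset.sum_le_sum_of_subset_of_nonneg (Finset.range_subset_range.mpr (by omega))
    exact fun l _ _ => hv0 _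
  have hIsum : ∀ j k : ℕ, k < d → ∑ l ∈ Iset d hd j k, (1 - uStar d l) = W j k := by
    intro j k hk
    unfold Iset
    rw [Finset.sum_image (by
      intro x hx y hy hxy
      rw [Finset.mem_coe, Finset.mem_range] at hx hy
      have := congrArg Fin.val hxy
      exact mod_helper2 d hd (by omega) (by omega) this)]
  have hcomp : ∀ j k : ℕ, k < d →
      ∑ x ∈ Finset.univ \ Iset d hd j k, (1 - uStar d x) = 1 - W j k := by
    intro j k hk
    rw [sum_compl_Iset hd (by omega) j k, hIsum j k hk]
  have hj_eval : ∀ j, j < d →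
      ((Finset.Icc 0 (d-1)).inf' (Finset.nonempty_Icc.mpr (Nat.zero_le _))
        fun k => max (u ⟨(j + k) % d, Nat.mod_lt _ hd⟩ -
          ∑ x ∈ Finset.univ \ Iset d hd j k, (1 - uStar d x)) 0)
      = min (v j) (max (u i + W j ((i.val + d - j) % d) - 1) 0) := by
    intro j hj
    set kst := (i.val + d - j) % d with hkst
    have hkstlt : kst < d := Nat.mod_lt _ hd
    have hsig : (j + kst) % d = i.val := mod_helper1 d i.val j i.isLt hj
    set g : ℕ → ℝ := fun k => max (u ⟨(j + k) % d, Nat.mod_lt _ hd⟩ -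
        ∑ x ∈ Finset.univ \ Iset d hd j k, (1 - uStar d x)) 0 with hg
    have hterm : ∀ k, k < d → g k = max (u ⟨(j + k) % d, Nat.mod_lt _ hd⟩ + W j k - 1) 0 := by
      intro k hk
      simp only [hg]
      rw [hcomp j k hk]
      congr 1
      ring
    have hne : ∀ k, k < d → k ≠ kst → (⟨(j + k) % d, Nat.mod_lt _ hd⟩ : Fin d) ≠ i := by
      intro k hk hkn hcon
      apply hkn
      have : (j + k) % d = (j + kst) % d := by rw [hsig]; exact congrArg Fin.val hcon
      exact mod_helper2 d hd hk hkstlt this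
    have hterm_ne : ∀ k, k < d → k ≠ kst → g k = W j k := by
      intro k hk hkn
      rw [hterm k hk, hmar _ (hne k hk hkn),
        show (1:ℝ) + W j k - 1 = W j k by ring]
      exact max_eq_left (hW0 j k)
    have hterm_kst : g kst = max (u i + W j kst - 1) 0 := by
      rw [hterm kst hkstlt,
        show (⟨(j + kst) % d, Nat.mod_lt _ hd⟩ : Fin d) = i from Fin.ext hsig]
    have hWjv : W j 0 = v j := by
      show ∑ l ∈ Finset.range 1, v (j + l) = v j
      rw [Finset.sum_range_one, Nat.add_zero]
    have hg0le : g 0 ≤ W j 0 := by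
      by_cases h0 : (0:ℕ) = kst
      · rw [← h0] at hterm_kst
        rw [hterm_kst]
        apply max_le _ (hW0 j 0)
        linarith
      · rw [hterm_ne 0 (by omega) h0]
    have hinf : (Finset.Icc 0 (d-1)).inf' (Finset.nonempty_Icc.mpr (Nat.zero_le _)) g
        = min (g 0) (g kst) := by
      apply le_antisymm
      · exact le_min (Finset.inf'_le g (by rw [Finset.mem_Icc]; omega))
          (Finset.inf'_le g (by rw [Finset.mem_Icc]; omega))
      · apply Finset.le_inf'
        intro k hk
        rw [Finset.mem_Icc] at hk
        have hkd : k < d := by omega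
        by_cases hkk : k = kst
        · rw [hkk]; exact min_le_right _ _
        · rw [hterm_ne k hkd hkk]
          exact le_trans (min_le_left _ _) (le_trans hg0le (hWmono j 0 k (Nat.zero_le _)))
    rw [hinf, hterm_kst]
    by_cases h0 : (0:ℕ) = kst
    · have hg0 : g 0 = max (u i + W j kst - 1) 0 := by
        rw [h0]; exact hterm_kst
      rw [hg0, min_self]
      refine (min_eq_right ?_).symm
      calc max (u i + W j kst - 1) 0 = g 0 := hg0.symm
        _ ≤ W j 0 := hg0le
        _ = v j := hWjv
    · rw [hterm_ne 0 (by omega) h0, hWjv]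
  -- assemble
  unfold CStar
  rw [Finset.sum_congr rfl (fun j hj => hj_eval j (Finset.mem_range.mp hj))]
  set φ : ℕ → ℕ := fun r => (i.val + d - r) % d with hφ
  have hφlt : ∀ r, φ r < d := fun r => Nat.mod_lt _ hd
  have hφφ : ∀ r, r < d → φ (φ r) = r := fun r hr => mod_helper3 d i.val r i.isLt hr
  set F : ℕ → ℝ := fun j => min (v j) (max (u i + W j (φ j) - 1) 0) with hF
  have hre : ∑ j ∈ Finset.range d, F j = ∑ r ∈ Finset.range d, F (φ r) := by
    apply Finset.sum_nbij' (i := φ) (j := φ)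
    · intro a ha; rw [Finset.mem_range] at ha ⊢; exact hφlt a
    · intro a ha; rw [Finset.mem_range] at ha ⊢; exact hφlt a
    · intro a ha; rw [Finset.mem_range] at ha; exact hφφ a ha
    · intro a ha; rw [Finset.mem_range] at ha; exact hφφ a ha
    · intro a ha
      rw [Finset.mem_range] at ha
      rw [hφφ a ha]
  rw [hre]
  set G : ℕ → ℝ := fun s => v (φ s) with hG
  have hWφ : ∀ r, r < d → W (φ r) r = ∑ s ∈ Finset.range (r+1), G s := by
    intro r hr
    simp only [hW]
    rw [← Finset.sum_range_reflect (fun l => v (φ r + l)) (r+1)]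
    apply Finset.sum_congr rfl
    intro l hl
    rw [Finset.mem_range] at hl
    have hmod : (φ r + (r + 1 - 1 - l)) % d = φ l % d := by
      rw [Nat.mod_eq_of_lt (hφlt l)]
      show ((i.val + d - r) % d + (r + 1 - 1 - l)) % d = (i.val + d - l) % d
      rw [Nat.mod_add_mod]
      congr 1
      omega
    show v (φ r + (r + 1 - 1 - l)) = G l
    show (1:ℝ) - uStar d ⟨(φ r + (r + 1 - 1 - l)) % d, Nat.mod_lt _ hd⟩
      = 1 - uStar d ⟨φ l % d, Nat.mod_lt _ hd⟩
    exact congrArg (fun x => 1 - uStar d x) (Fin.ext hmod)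
  have hstep : ∀ r ∈ Finset.range d,
      F (φ r) = min (G r) (max ((∑ s ∈ Finset.range (r+1), G s) - (1 - u i)) 0) := by
    intro r hr
    rw [Finset.mem_range] at hr
    simp only [hF]
    rw [hφφ r hr, hWφ r hr,
      show u i + (∑ s ∈ Finset.range (r+1), G s) - 1
          = (∑ s ∈ Finset.range (r+1), G s) - (1 - u i) by ring]
  rw [Finset.sum_congr rfl hstep]
  rw [telescope G (fun r => hv0 _) (1 - u i) d]
  have hGsum : ∑ s ∈ Finset.range d, G s = 1 := by
    have h1 : ∑ s ∈ Finset.range d, G s = ∑ s ∈ Finset.range d, v s := by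
      apply Finset.sum_nbij' (i := φ) (j := φ)
      · intro a ha; rw [Finset.mem_range] at ha ⊢; exact hφlt a
      · intro a ha; rw [Finset.mem_range] at ha ⊢; exact hφlt a
      · intro a ha; rw [Finset.mem_range] at ha; exact hφφ a ha
      · intro a ha; rw [Finset.mem_range] at ha; exact hφφ a ha
      · intro a ha; rfl
    have h2 : ∑ s ∈ Finset.range d, v s = ∑ l : Fin d, (1 - uStar d l) := by
      rw [← Fin.sum_univ_eq_sum_range v d]
      apply Finset.sum_congr rfl
      intro l _
      show (1:ℝ) - uStar d ⟨l.val % d, Nat.mod_lt _ hd⟩ = 1 - uStar d l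
      exact congrArg (fun x => 1 - uStar d x) (Fin.ext (Nat.mod_eq_of_lt l.isLt))
    rw [h1, h2, uStar_sum (by omega : 1 ≤ d)]
  rw [hGsum, show (1:ℝ) - (1 - u i) = u i by ring,
    max_eq_left hu0, max_eq_right (by linarith : -(1 - u i) ≤ 0)]
  ring

/-- The function `C*` is a `d`-copula. -/
theorem CStar_isCopula (d : ℕ) (hd : 2 ≤ d) :
    IsCopula d (CStar d (by omega)) := by
  refine ⟨?_, ?_, ?_⟩
  · rintro u hu ⟨i₀, h0⟩
    exact CStar_grounded d hd (by omega) u hu i₀ h0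
  · intro u hu i hmar
    exact CStar_margin d hd (by omega) u hu i hmar
  · intro a b ha hb hab
    exact CStar_increasing d hd (by omega) a b hab
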